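/- Let d ∈ (0,1), h ∈ ℝ, R > 0, and let y, Φ : (0,R] → (0,∞) be continuous. Assume there exist constants C > 0, M > 0 and ε₀ ∈ (0,1/2] such that one of the following holds: (a) for every ε ∈ (0,ε₀] and every r ∈ (0,R/2], one has y(r) ≤ C·ε^{−h}·Φ(r)·y(r(1−ε))^d and max{Φ(τ) : τ ∈ [r/2,r]} ≤ M·Φ(r); or (b) for every ε ∈ (0,ε₀] and every r ∈ (0,R/2], one has y(r) ≤ C·ε^{−h}·Φ(r)·y(r(1+ε))^d and max{Φ(τ) : τ ∈ [r,3r/2]} ≤ M·Φ(r). Then there exists a constant C' > 0 such that y(r) ≤ C'·Φ(r)^{1/(1−d)} for all r ∈ (0,R/2]. -/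

import Mathlib

open Set
open Finset Filter Real

lemma boot_aux (d h : ℝ) (hd0 : 0 < d) (hd1 : d < 1)
    (C2 B : ℝ) (hC2 : 0 < C2) (hB : 1 ≤ B)
    (ε : ℕ → ℝ) (hε : ∀ n, 0 < ε n)
    (E : ℝ) (hE : ∀ n, ∏ k ∈ Finset.range n, ((ε k) ^ (-h)) ^ (d ^ k) ≤ E)
    (Y : ℕ → ℝ) (hY : ∀ n, 0 < Y n) (hYB : ∀ n, Y n ≤ B)
    (hstep : ∀ n, Y n ≤ C2 * (ε n) ^ (-h) * (Y (n+1)) ^ d) :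
    Y 0 ≤ E * C2 ^ (1/(1-d)) := by
  have hd0' : (0:ℝ) ≤ d := hd0.le
  have hdn : ∀ n : ℕ, (0:ℝ) ≤ d ^ n := fun n => pow_nonneg hd0' n
  have hεh : ∀ n, (0:ℝ) < (ε n) ^ (-h) := fun n => Real.rpow_pos_of_pos (hε n) _
  have hB0 : (0:ℝ) < B := lt_of_lt_of_le one_pos hB
  -- the iterated inequality
  have ind : ∀ n, Y 0 ≤ (∏ k ∈ Finset.range n, (C2 * (ε k) ^ (-h)) ^ (d ^ k)) * Y n ^ (d ^ n) := by
    intro n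
    induction n with
    | zero => simp
    | succ n ih =>
      have hstepn : Y n ^ (d ^ n) ≤
          ((C2 * (ε n) ^ (-h)) ^ (d ^ n)) * Y (n+1) ^ (d ^ (n+1)) := by
        have h1 := Real.rpow_le_rpow (hY n).le (hstep n) (hdn n)
        calc Y n ^ (d ^ n) ≤ (C2 * (ε n) ^ (-h) * (Y (n+1)) ^ d) ^ (d ^ n) := h1
        _ = (C2 * (ε n) ^ (-h)) ^ (d ^ n) * ((Y (n+1)) ^ d) ^ (d ^ n) := by
            rw [Real.mul_rpow (mul_pos hC2 (hεh n)).le (Real.rpow_nonneg (hY _).le _)]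
        _ = (C2 * (ε n) ^ (-h)) ^ (d ^ n) * Y (n+1) ^ (d ^ (n+1)) := by
            rw [← Real.rpow_mul (hY (n+1)).le, ← pow_succ']
      have hPpos : (0:ℝ) ≤ ∏ k ∈ Finset.range n, (C2 * (ε k) ^ (-h)) ^ (d ^ k) :=
        Finset.prod_nonneg fun k _ =>
          (Real.rpow_pos_of_pos (mul_pos hC2 (hεh k)) _).le
      calc Y 0 ≤ (∏ k ∈ Finset.range n, (C2 * (ε k) ^ (-h)) ^ (d ^ k)) * Y n ^ (d ^ n) := ih
      _ ≤ (∏ k ∈ Finset.range n, (C2 * (ε k) ^ (-h)) ^ (d ^ k)) *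
            (((C2 * (ε n) ^ (-h)) ^ (d ^ n)) * Y (n+1) ^ (d ^ (n+1))) :=
          mul_le_mul_of_nonneg_left hstepn hPpos
      _ = (∏ k ∈ Finset.range (n+1), (C2 * (ε k) ^ (-h)) ^ (d ^ k)) * Y (n+1) ^ (d ^ (n+1)) := by
          rw [Finset.prod_range_succ]; ring
  have hE1 : (1:ℝ) ≤ E := by simpa using hE 0
  -- rewrite the product
  have key : ∀ n, Y 0 ≤ C2 ^ (∑ k ∈ Finset.range n, d ^ k) * E * B ^ (d ^ n) := by
    intro n
    have hsplit : (∏ k ∈ Finset.range n, (C2 * (ε k) ^ (-h)) ^ (d ^ k)) =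
        C2 ^ (∑ k ∈ Finset.range n, d ^ k) *
          ∏ k ∈ Finset.range n, ((ε k) ^ (-h)) ^ (d ^ k) := by
      rw [Real.rpow_sum_of_pos hC2, ← Finset.prod_mul_distrib]
      apply Finset.prod_congr rfl
      intro k _
      rw [Real.mul_rpow hC2.le (hεh k).le]
    have hYn : Y n ^ (d ^ n) ≤ B ^ (d ^ n) := Real.rpow_le_rpow (hY n).le (hYB n) (hdn n)
    have hC2s : (0:ℝ) < C2 ^ (∑ k ∈ Finset.range n, d ^ k) := Real.rpow_pos_of_pos hC2 _
    calc Y 0 ≤ (∏ k ∈ Finset.range n, (C2 * (ε k) ^ (-h)) ^ (d ^ k)) * Y n ^ (d ^ n) := ind n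
    _ = C2 ^ (∑ k ∈ Finset.range n, d ^ k) *
          (∏ k ∈ Finset.range n, ((ε k) ^ (-h)) ^ (d ^ k)) * Y n ^ (d ^ n) := by rw [hsplit]
    _ ≤ C2 ^ (∑ k ∈ Finset.range n, d ^ k) * E * B ^ (d ^ n) := by
        apply mul_le_mul
        · exact mul_le_mul_of_nonneg_left (hE n) hC2s.le
        · exact hYn
        · exact Real.rpow_nonneg (hY n).le _
        · exact mul_nonneg hC2s.le (by linarith)
  -- pass to the limit
  have hS : Tendsto (fun n => ∑ k ∈ Finset.range n, d ^ k) atTop (nhds (1 - d)⁻¹) :=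
    (hasSum_geometric_of_lt_one hd0' hd1).tendsto_sum_nat
  have hdlim : Tendsto (fun n : ℕ => d ^ n) atTop (nhds 0) :=
    tendsto_pow_atTop_nhds_zero_of_lt_one hd0' hd1
  have h1 : Tendsto (fun n => C2 ^ (∑ k ∈ Finset.range n, d ^ k)) atTop
      (nhds (C2 ^ ((1-d)⁻¹))) :=
    (Real.continuousAt_const_rpow hC2.ne').tendsto.comp hS
  have h2 : Tendsto (fun n : ℕ => B ^ (d ^ n)) atTop (nhds (B ^ (0:ℝ))) :=
    (Real.continuousAt_const_rpow hB0.ne').tendsto.comp hdlim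
  have hlim : Tendsto (fun n => C2 ^ (∑ k ∈ Finset.range n, d ^ k) * E * B ^ (d ^ n)) atTop
      (nhds (C2 ^ ((1-d)⁻¹) * E * B ^ (0:ℝ))) := (h1.mul_const E).mul h2
  have := ge_of_tendsto' hlim key
  rw [Real.rpow_zero, mul_one, one_div] at *
  linarith [this]

lemma Ebound (d h ε₀ : ℝ) (hd0 : 0 < d) (hd1 : d < 1) (hε₀ : 0 < ε₀) :
    ∃ E : ℝ, ∀ n, ∏ k ∈ Finset.range n,
      ((ε₀ * (1/2:ℝ)^(k+2)) ^ (-h)) ^ (d ^ k) ≤ E := by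
  set g : ℕ → ℝ := fun k =>
    |h| * (|Real.log ε₀| + 2 * Real.log 2) * d ^ k
      + (|h| * Real.log 2) * ((k:ℝ) * d ^ k) with hg
  have hd0' : (0:ℝ) ≤ d := hd0.le
  have hgsum : Summable g := by
    apply Summable.add
    · exact (summable_geometric_of_lt_one hd0' hd1).mul_left _
    · have h2 : ‖d‖ < 1 := by rwa [Real.norm_eq_abs, abs_of_nonneg hd0']
      have := summable_pow_mul_geometric_of_norm_lt_one (R := ℝ) 1 h2
      simpa [pow_one] using this.mul_left (|h| * Real.log 2)
  set T := ∑' k, g k with hT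
  refine ⟨Real.exp T, fun n => ?_⟩
  have hεk : ∀ k : ℕ, (0:ℝ) < ε₀ * (1/2:ℝ)^(k+2) := fun k => by positivity
  have hterm : ∀ k : ℕ,
      Real.log ((((ε₀ * (1/2:ℝ)^(k+2)) ^ (-h)) ^ (d ^ k))) ≤ g k := by
    intro k
    rw [Real.log_rpow (Real.rpow_pos_of_pos (hεk k) _), Real.log_rpow (hεk k)]
    have hlog : Real.log (ε₀ * (1/2:ℝ)^(k+2)) =
        Real.log ε₀ - ((k:ℝ)+2) * Real.log 2 := by
      rw [Real.log_mul hε₀.ne' (by positivity), Real.log_pow]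
      have : Real.log ((1:ℝ)/2) = -Real.log 2 := by
        rw [one_div, Real.log_inv]
      rw [this]; push_cast; ring
    rw [hlog]
    have hdk : (0:ℝ) ≤ d ^ k := pow_nonneg hd0' k
    have hl2 : (0:ℝ) < Real.log 2 := Real.log_pos (by norm_num)
    have h3 : |((k:ℝ)+2) * Real.log 2| = ((k:ℝ)+2) * Real.log 2 :=
      abs_of_nonneg (mul_nonneg (by positivity) hl2.le)
    have h2 : |Real.log ε₀ - ((k:ℝ)+2) * Real.log 2| ≤
        |Real.log ε₀| + ((k:ℝ)+2) * Real.log 2 := by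
      calc |Real.log ε₀ - ((k:ℝ)+2) * Real.log 2|
          ≤ |Real.log ε₀| + |((k:ℝ)+2) * Real.log 2| := abs_sub _ _
        _ = |Real.log ε₀| + ((k:ℝ)+2) * Real.log 2 := by rw [h3]
    have habs1 : -h * (Real.log ε₀ - ((k:ℝ)+2) * Real.log 2) ≤
        |h| * (|Real.log ε₀| + ((k:ℝ)+2) * Real.log 2) := by
      have h1 : -h * (Real.log ε₀ - ((k:ℝ)+2) * Real.log 2) ≤
          |(-h) * (Real.log ε₀ - ((k:ℝ)+2) * Real.log 2)| := le_abs_self _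
      rw [abs_mul, abs_neg] at h1
      exact h1.trans (mul_le_mul_of_nonneg_left h2 (abs_nonneg h))
    calc d ^ k * (-h * (Real.log ε₀ - ((k:ℝ)+2) * Real.log 2))
        ≤ d ^ k * (|h| * (|Real.log ε₀| + ((k:ℝ)+2) * Real.log 2)) :=
          mul_le_mul_of_nonneg_left habs1 hdk
      _ = g k := by simp only [hg]; ring
  have hppos : (0:ℝ) < ∏ k ∈ Finset.range n, ((ε₀ * (1/2:ℝ)^(k+2)) ^ (-h)) ^ (d ^ k) :=
    Finset.prod_pos fun k _ => Real.rpow_pos_of_pos (Real.rpow_pos_of_pos (hεk k) _) _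
  have hlogp : Real.log (∏ k ∈ Finset.range n, ((ε₀ * (1/2:ℝ)^(k+2)) ^ (-h)) ^ (d ^ k))
      = ∑ k ∈ Finset.range n, Real.log (((ε₀ * (1/2:ℝ)^(k+2)) ^ (-h)) ^ (d ^ k)) :=
    Real.log_prod fun k _ =>
      (Real.rpow_pos_of_pos (Real.rpow_pos_of_pos (hεk k) _) _).ne'
  have hsum_le : ∑ k ∈ Finset.range n, Real.log (((ε₀ * (1/2:ℝ)^(k+2)) ^ (-h)) ^ (d ^ k)) ≤ T := by
    calc ∑ k ∈ Finset.range n, Real.log (((ε₀ * (1/2:ℝ)^(k+2)) ^ (-h)) ^ (d ^ k))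
        ≤ ∑ k ∈ Finset.range n, g k := Finset.sum_le_sum fun k _ => hterm k
      _ ≤ T := by
          apply Summable.sum_le_tsum _ _ hgsum
          intro k _
          have hl2 : (0:ℝ) < Real.log 2 := Real.log_pos (by norm_num)
          simp only [hg]
          have hdk : (0:ℝ) ≤ d ^ k := pow_nonneg hd0' k
          have : (0:ℝ) ≤ (k:ℝ) := Nat.cast_nonneg k
          nlinarith [abs_nonneg h, abs_nonneg (Real.log ε₀), mul_nonneg (mul_nonneg (abs_nonneg h) hl2.le) (mul_nonneg this hdk), mul_nonneg (mul_nonneg (abs_nonneg h) (add_nonneg (abs_nonneg (Real.log ε₀)) (mul_nonneg (by norm_num : (0:ℝ) ≤ 2) hl2.le))) hdk]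
  calc (∏ k ∈ Finset.range n, ((ε₀ * (1/2:ℝ)^(k+2)) ^ (-h)) ^ (d ^ k))
      = Real.exp (Real.log (∏ k ∈ Finset.range n, ((ε₀ * (1/2:ℝ)^(k+2)) ^ (-h)) ^ (d ^ k))) :=
        (Real.exp_log hppos).symm
    _ ≤ Real.exp T := Real.exp_le_exp.mpr (by rw [hlogp]; exact hsum_le)

lemma case_aux (d h : ℝ) (hd0 : 0 < d) (hd1 : d < 1)
    (y : ℝ → ℝ) (C2 E : ℝ) (hC2 : 0 < C2)
    (ε : ℕ → ℝ) (hεpos : ∀ n, 0 < ε n)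
    (hE : ∀ n, ∏ k ∈ Finset.range n, ((ε k) ^ (-h)) ^ (d ^ k) ≤ E)
    (ρ : ℕ → ℝ) (a b : ℝ) (hab : a ≤ b)
    (hρ : ∀ n, ρ n ∈ Set.Icc a b)
    (hcont : ContinuousOn y (Set.Icc a b))
    (hpos : ∀ t ∈ Set.Icc a b, 0 < y t)
    (hstep : ∀ n, y (ρ n) ≤ C2 * (ε n) ^ (-h) * (y (ρ (n+1))) ^ d) :
    y (ρ 0) ≤ E * C2 ^ (1/(1-d)) := by
  obtain ⟨x, hxmem, hx⟩ := isCompact_Icc.exists_isMaxOn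
    (Set.nonempty_Icc.mpr hab) hcont
  set B := max (y x) 1 with hB
  have hB1 : (1:ℝ) ≤ B := le_max_right _ _
  exact boot_aux d h hd0 hd1 C2 B hC2 hB1 ε hεpos E hE (fun n => y (ρ n))
    (fun n => hpos _ (hρ n))
    (fun n => le_trans (hx (hρ n)) (le_max_left _ _))
    hstep

lemma eps_sum_le (ε₀ : ℝ) (hε₀ : 0 < ε₀) (n : ℕ) :
    ∑ k ∈ Finset.range n, ε₀ * (1/2:ℝ)^(k+2) ≤ ε₀/2 := by
  have h1 : ∑ k ∈ Finset.range n, ε₀ * (1/2:ℝ)^(k+2)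
      = (ε₀/4) * ∑ k ∈ Finset.range n, (1/2:ℝ)^k := by
    rw [Finset.mul_sum]
    apply Finset.sum_congr rfl
    intro k _
    rw [pow_add]
    ring
  have h2 : ∑ k ∈ Finset.range n, (1/2:ℝ)^k ≤ 2 := by
    have := Summable.sum_le_tsum (Finset.range n)
      (fun k _ => by positivity : ∀ k ∉ Finset.range n, (0:ℝ) ≤ (1/2:ℝ)^k)
      (summable_geometric_of_lt_one (by norm_num) (by norm_num))
    rw [tsum_geometric_of_lt_one (by norm_num) (by norm_num)] at this
    norm_num at this
    linarith
  rw [h1]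
  nlinarith

lemma prod_one_sub_bounds (ε : ℕ → ℝ) (hpos : ∀ k, 0 < ε k) (hle : ∀ k, ε k ≤ 1)
    (hs : ∀ n, ∑ k ∈ Finset.range n, ε k ≤ 1/4) (n : ℕ) :
    1 - ∑ k ∈ Finset.range n, ε k ≤ ∏ k ∈ Finset.range n, (1 - ε k) ∧
      ∏ k ∈ Finset.range n, (1 - ε k) ≤ 1 := by
  induction n with
  | zero => simp
  | succ n ih =>
    obtain ⟨hlo, hhi⟩ := ih
    have hsn := hs n
    have hsnn : 0 ≤ ∑ k ∈ Finset.range n, ε k :=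
      Finset.sum_nonneg fun k _ => (hpos k).le
    have hεn := hpos n
    have hεn1 := hle n
    rw [Finset.prod_range_succ, Finset.sum_range_succ]
    constructor
    · nlinarith
    · nlinarith

lemma prod_one_add_bounds (ε : ℕ → ℝ) (hpos : ∀ k, 0 < ε k)
    (hs : ∀ n, ∑ k ∈ Finset.range n, ε k ≤ 1/4) (n : ℕ) :
    1 ≤ ∏ k ∈ Finset.range n, (1 + ε k) ∧
      ∏ k ∈ Finset.range n, (1 + ε k) ≤ 1 + 2 * ∑ k ∈ Finset.range n, ε k := by
  induction n with
  | zero => simp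
  | succ n ih =>
    obtain ⟨hlo, hhi⟩ := ih
    have hsn := hs n
    have hsn1 := hs (n+1)
    have hsnn : 0 ≤ ∑ k ∈ Finset.range n, ε k :=
      Finset.sum_nonneg fun k _ => (hpos k).le
    have hεn := hpos n
    rw [Finset.prod_range_succ, Finset.sum_range_succ]
    rw [Finset.sum_range_succ] at hsn1
    constructor
    · nlinarith
    · nlinarith


/-- Lemma 3.2: the bootstrap lemma.  If `d ∈ (0,1)` and the continuous
positive functions `y, Φ` on `(0,R]` satisfy, for all `ε ∈ (0,ε₀]` and `r ∈ (0,R/2]`,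
either `y(r) ≤ C ε^{-h} Φ(r) y(r(1−ε))^d` together with `max_{[r/2,r]} Φ ≤ M Φ(r)`, or
`y(r) ≤ C ε^{-h} Φ(r) y(r(1+ε))^d` together with `max_{[r,3r/2]} Φ ≤ M Φ(r)`, then
`y(r) ≤ C' Φ(r)^{1/(1−d)}` on `(0,R/2]` for some `C' > 0`. -/
theorem stmt4 (d h R : ℝ) (hd0 : 0 < d) (hd1 : d < 1) (hR : 0 < R)
    (y Φ : ℝ → ℝ)
    (hycont : ContinuousOn y (Set.Ioc 0 R)) (hΦcont : ContinuousOn Φ (Set.Ioc 0 R))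
    (hypos : ∀ r ∈ Set.Ioc (0:ℝ) R, 0 < y r) (hΦpos : ∀ r ∈ Set.Ioc (0:ℝ) R, 0 < Φ r)
    (C M ε₀ : ℝ) (hC : 0 < C) (hM : 0 < M) (hε₀ : 0 < ε₀) (hε₀' : ε₀ ≤ 1 / 2)
    (hmain :
      (∀ ε ∈ Set.Ioc (0:ℝ) ε₀, ∀ r ∈ Set.Ioc (0:ℝ) (R / 2),
        y r ≤ C * ε ^ (-h) * Φ r * y (r * (1 - ε)) ^ d ∧
        ∀ τ ∈ Set.Icc (r / 2) r, Φ τ ≤ M * Φ r) ∨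
      (∀ ε ∈ Set.Ioc (0:ℝ) ε₀, ∀ r ∈ Set.Ioc (0:ℝ) (R / 2),
        y r ≤ C * ε ^ (-h) * Φ r * y (r * (1 + ε)) ^ d ∧
        ∀ τ ∈ Set.Icc r (3 * r / 2), Φ τ ≤ M * Φ r)) :
    ∃ C' > (0:ℝ), ∀ r ∈ Set.Ioc (0:ℝ) (R / 2), y r ≤ C' * Φ r ^ (1 / (1 - d)) := by
  have hd1' : (0:ℝ) < 1 - d := by linarith
  obtain ⟨E, hE⟩ := Ebound d h ε₀ hd0 hd1 hε₀
  have hE1 : (1:ℝ) ≤ E := by simpa using hE 0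
  set ε : ℕ → ℝ := fun k => ε₀ * (1/2:ℝ)^(k+2) with hεdef
  have hεpos : ∀ k, 0 < ε k := fun k => by positivity
  have hεle : ∀ k, ε k ≤ ε₀ := by
    intro k
    have h1 : (1/2:ℝ)^(k+2) ≤ 1 := pow_le_one₀ (by norm_num) (by norm_num)
    simp only [hεdef]
    nlinarith
  have hεsum : ∀ n, ∑ k ∈ Finset.range n, ε k ≤ 1/4 := fun n =>
    le_trans (eps_sum_le ε₀ hε₀ n) (by linarith)
  have hεle1 : ∀ k, ε k ≤ 1 := fun k => le_trans (hεle k) (by linarith)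
  have hCM : (0:ℝ) < C * M := mul_pos hC hM
  have hA0 : (0:ℝ) < E * (C*M) ^ (1/(1-d)) := by positivity
  rcases hmain with hCaseA | hCaseB
  · -- case (a): downward iteration, valid on all of (0, R/2]
    refine ⟨E * (C*M) ^ (1/(1-d)), hA0, ?_⟩
    intro r hr
    obtain ⟨hr0, hrR2⟩ := hr
    have hrR : r ≤ R := le_trans hrR2 (by linarith)
    have hΦr : 0 < Φ r := hΦpos r ⟨hr0, hrR⟩
    set p : ℕ → ℝ := fun n => ∏ k ∈ Finset.range n, (1 - ε k) with hpdef
    have hpb : ∀ n, 1/2 ≤ p n ∧ p n ≤ 1 := by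
      intro n
      obtain ⟨h1, h2⟩ := prod_one_sub_bounds ε hεpos hεle1 hεsum n
      exact ⟨by linarith [hεsum n], h2⟩
    set ρ : ℕ → ℝ := fun n => r * p n with hρdef
    have hρmem : ∀ n, ρ n ∈ Set.Icc (r/2) r := by
      intro n
      obtain ⟨h1, h2⟩ := hpb n
      constructor
      · simp only [hρdef]; nlinarith
      · simp only [hρdef]; nlinarith
    have hIccsub : Set.Icc (r/2) r ⊆ Set.Ioc 0 R := fun t ht =>
      ⟨lt_of_lt_of_le (by linarith) ht.1, le_trans ht.2 hrR⟩
    have hρIoc : ∀ n, ρ n ∈ Set.Ioc (0:ℝ) (R/2) := fun n =>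
      ⟨(hIccsub (hρmem n)).1, le_trans (hρmem n).2 hrR2⟩
    have hrec : ∀ n, ρ (n+1) = ρ n * (1 - ε n) := by
      intro n
      simp only [hρdef, hpdef, Finset.prod_range_succ]
      ring
    have hΦb : ∀ n, Φ (ρ n) ≤ M * Φ r := fun n =>
      (hCaseA ε₀ ⟨hε₀, le_refl _⟩ r ⟨hr0, hrR2⟩).2 (ρ n) (hρmem n)
    have hstep : ∀ n, y (ρ n) ≤ (C*M*Φ r) * (ε n)^(-h) * (y (ρ (n+1)))^d := by
      intro n
      have h1 := (hCaseA (ε n) ⟨hεpos n, hεle n⟩ (ρ n) (hρIoc n)).1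
      rw [← hrec n] at h1
      have hyd : (0:ℝ) ≤ (y (ρ (n+1)))^d :=
        Real.rpow_nonneg (hypos _ (hIccsub (hρmem (n+1)))).le _
      have hεh : (0:ℝ) < (ε n)^(-h) := Real.rpow_pos_of_pos (hεpos n) _
      calc y (ρ n) ≤ C * (ε n)^(-h) * Φ (ρ n) * (y (ρ (n+1)))^d := h1
        _ ≤ C * (ε n)^(-h) * (M * Φ r) * (y (ρ (n+1)))^d := by
            apply mul_le_mul_of_nonneg_right _ hyd
            exact mul_le_mul_of_nonneg_left (hΦb n) (by positivity)
        _ = (C*M*Φ r) * (ε n)^(-h) * (y (ρ (n+1)))^d := by ring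
    have hkey := case_aux d h hd0 hd1 y (C*M*Φ r) E (by positivity) ε hεpos hE
      ρ (r/2) r (by linarith) hρmem (hycont.mono hIccsub)
      (fun t ht => hypos t (hIccsub ht)) hstep
    have hρ0 : ρ 0 = r := by simp [hρdef, hpdef]
    rw [hρ0] at hkey
    calc y r ≤ E * (C*M*Φ r) ^ (1/(1-d)) := hkey
      _ = E * (C*M) ^ (1/(1-d)) * Φ r ^ (1/(1-d)) := by
          rw [Real.mul_rpow hCM.le hΦr.le]; ring
  · -- case (b): upward iteration on (0, R/3], compactness on [R/3, R/2]
    -- compact part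
    have hKsub : Set.Icc (R/3) (R/2) ⊆ Set.Ioc 0 R := fun t ht =>
      ⟨lt_of_lt_of_le (by linarith) ht.1, le_trans ht.2 (by linarith)⟩
    obtain ⟨x, hxmem, hx⟩ := isCompact_Icc.exists_isMaxOn
      (Set.nonempty_Icc.mpr (by linarith)) (hycont.mono hKsub)
    obtain ⟨z, hzmem, hz⟩ := isCompact_Icc.exists_isMinOn
      (Set.nonempty_Icc.mpr (by linarith)) (hΦcont.mono hKsub)
    have hΦz : 0 < Φ z := hΦpos z (hKsub hzmem)
    set C2' := y x / (Φ z) ^ (1/(1-d)) with hC2'def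
    have hΦze : (0:ℝ) < (Φ z) ^ (1/(1-d)) := Real.rpow_pos_of_pos hΦz _
    have hC2' : 0 < C2' := div_pos (hypos x (hKsub hxmem)) hΦze
    have hcompact : ∀ r ∈ Set.Icc (R/3) (R/2), y r ≤ C2' * Φ r ^ (1/(1-d)) := by
      intro r hrmem
      have hΦr : 0 < Φ r := hΦpos r (hKsub hrmem)
      have h1 : y r ≤ y x := hx hrmem
      have h2 : (Φ z) ^ (1/(1-d)) ≤ (Φ r) ^ (1/(1-d)) :=
        Real.rpow_le_rpow hΦz.le (hz hrmem) (by positivity)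
      have h3 : y x = C2' * (Φ z) ^ (1/(1-d)) := by
        rw [hC2'def]
        field_simp
      calc y r ≤ y x := h1
        _ = C2' * (Φ z) ^ (1/(1-d)) := h3
        _ ≤ C2' * (Φ r) ^ (1/(1-d)) := mul_le_mul_of_nonneg_left h2 hC2'.le
    -- iteration part
    have hiter : ∀ r ∈ Set.Ioc (0:ℝ) (R/3),
        y r ≤ E * (C*M) ^ (1/(1-d)) * Φ r ^ (1/(1-d)) := by
      intro r hr
      obtain ⟨hr0, hrR3⟩ := hr
      have hrR2 : r ≤ R/2 := le_trans hrR3 (by linarith)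
      have hrR : r ≤ R := le_trans hrR2 (by linarith)
      have hΦr : 0 < Φ r := hΦpos r ⟨hr0, hrR⟩
      set q : ℕ → ℝ := fun n => ∏ k ∈ Finset.range n, (1 + ε k) with hqdef
      have hqb : ∀ n, 1 ≤ q n ∧ q n ≤ 3/2 := by
        intro n
        obtain ⟨h1, h2⟩ := prod_one_add_bounds ε hεpos hεsum n
        exact ⟨h1, by linarith [hεsum n]⟩
      set ρ : ℕ → ℝ := fun n => r * q n with hρdef
      have hρmem : ∀ n, ρ n ∈ Set.Icc r (3*r/2) := by
        intro n
        obtain ⟨h1, h2⟩ := hqb n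
        constructor
        · simp only [hρdef]; nlinarith
        · simp only [hρdef]; nlinarith
      have hIccsub : Set.Icc r (3*r/2) ⊆ Set.Ioc 0 R := fun t ht =>
        ⟨lt_of_lt_of_le hr0 ht.1, le_trans ht.2 (by linarith)⟩
      have hρIoc : ∀ n, ρ n ∈ Set.Ioc (0:ℝ) (R/2) := fun n =>
        ⟨(hIccsub (hρmem n)).1, le_trans (hρmem n).2 (by linarith)⟩
      have hrec : ∀ n, ρ (n+1) = ρ n * (1 + ε n) := by
        intro n
        simp only [hρdef, hqdef, Finset.prod_range_succ]
        ring
      have hΦb : ∀ n, Φ (ρ n) ≤ M * Φ r := fun n =>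
        (hCaseB ε₀ ⟨hε₀, le_refl _⟩ r ⟨hr0, hrR2⟩).2 (ρ n) (hρmem n)
      have hstep : ∀ n, y (ρ n) ≤ (C*M*Φ r) * (ε n)^(-h) * (y (ρ (n+1)))^d := by
        intro n
        have h1 := (hCaseB (ε n) ⟨hεpos n, hεle n⟩ (ρ n) (hρIoc n)).1
        rw [← hrec n] at h1
        have hyd : (0:ℝ) ≤ (y (ρ (n+1)))^d :=
          Real.rpow_nonneg (hypos _ (hIccsub (hρmem (n+1)))).le _
        have hεh : (0:ℝ) < (ε n)^(-h) := Real.rpow_pos_of_pos (hεpos n) _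
        calc y (ρ n) ≤ C * (ε n)^(-h) * Φ (ρ n) * (y (ρ (n+1)))^d := h1
          _ ≤ C * (ε n)^(-h) * (M * Φ r) * (y (ρ (n+1)))^d := by
              apply mul_le_mul_of_nonneg_right _ hyd
              exact mul_le_mul_of_nonneg_left (hΦb n) (by positivity)
          _ = (C*M*Φ r) * (ε n)^(-h) * (y (ρ (n+1)))^d := by ring
      have hkey := case_aux d h hd0 hd1 y (C*M*Φ r) E (by positivity) ε hεpos hE
        ρ r (3*r/2) (by linarith) hρmem (hycont.mono hIccsub)
        (fun t ht => hypos t (hIccsub ht)) hstep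
      have hρ0 : ρ 0 = r := by simp [hρdef, hqdef]
      rw [hρ0] at hkey
      calc y r ≤ E * (C*M*Φ r) ^ (1/(1-d)) := hkey
        _ = E * (C*M) ^ (1/(1-d)) * Φ r ^ (1/(1-d)) := by
            rw [Real.mul_rpow hCM.le hΦr.le]; ring
    -- combine
    refine ⟨max (E * (C*M) ^ (1/(1-d))) C2', lt_max_of_lt_left hA0, ?_⟩
    intro r hr
    obtain ⟨hr0, hrR2⟩ := hr
    have hrR : r ≤ R := le_trans hrR2 (by linarith)
    have hΦr : 0 < Φ r := hΦpos r ⟨hr0, hrR⟩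
    have hΦre : (0:ℝ) ≤ Φ r ^ (1/(1-d)) := Real.rpow_nonneg hΦr.le _
    by_cases hr3 : r ≤ R/3
    · calc y r ≤ E * (C*M) ^ (1/(1-d)) * Φ r ^ (1/(1-d)) := hiter r ⟨hr0, hr3⟩
        _ ≤ max (E * (C*M) ^ (1/(1-d))) C2' * Φ r ^ (1/(1-d)) :=
          mul_le_mul_of_nonneg_right (le_max_left _ _) hΦre
    · push_neg at hr3
      calc y r ≤ C2' * Φ r ^ (1/(1-d)) := hcompact r ⟨hr3.le, hrR2⟩
        _ ≤ max (E * (C*M) ^ (1/(1-d))) C2' * Φ r ^ (1/(1-d)) :=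
          mul_le_mul_of_nonneg_right (le_max_right _ _) hΦre
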